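/- Let 𝔐 = (V,⟨·,·⟩,A) be Jacobi–Tsankov. Then for every x ∈ V the Jacobi operator J(x) is a nilpotent endomorphism of V; in particular 0 is the only real eigenvalue of J(x) for every x, so 𝔐 is Osserman. -/
import Mathlib


noncomputable section

/-- The Jacobi operator `J(x) : y ↦ 𝒜(y,x)x` of a (tri)linear curvature operator `𝒜`. -/
def jacobiOp {V : Type*} [AddCommGroup V] [Module ℝ V]
    (Aop : V →ₗ[ℝ] V →ₗ[ℝ] V →ₗ[ℝ] V) (x : V) : V →ₗ[ℝ] V where
  toFun y := Aop y x x
  map_add' y z := by simp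
  map_smul' c y := by simp

/-- The polarized Jacobi operator `J(x,y) : z ↦ ½(𝒜(z,x)y + 𝒜(z,y)x)`. -/
def jacobiPol {V : Type*} [AddCommGroup V] [Module ℝ V]
    (Aop : V →ₗ[ℝ] V →ₗ[ℝ] V →ₗ[ℝ] V) (x y : V) : V →ₗ[ℝ] V where
  toFun z := (1/2 : ℝ) • (Aop z x y + Aop z y x)
  map_add' a b := by simp [smul_add]; abel
  map_smul' c a := by simp [smul_add, smul_comm c]

/-- If `𝔐 = (V,⟨·,·⟩,A)` is Jacobi–Tsankov, then every Jacobi operator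
`J(x)` is nilpotent; in particular `0` is the only real eigenvalue of `J(x)` for
every `x`, so `𝔐` is Osserman. -/
theorem jacobiTsankov_osserman
    {V : Type*} [AddCommGroup V] [Module ℝ V] [FiniteDimensional ℝ V]
    -- a nondegenerate symmetric bilinear form ⟨·,·⟩ on V
    (B : LinearMap.BilinForm ℝ V)
    (hBsymm : ∀ x y : V, B x y = B y x)
    (hBnd : ∀ x : V, (∀ y : V, B x y = 0) → x = 0)
    -- the curvature operator 𝒜, with `A x y z w = ⟨𝒜(x,y)z, w⟩`
    (Aop : V →ₗ[ℝ] V →ₗ[ℝ] V →ₗ[ℝ] V)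
    -- A(x,y,z,w) = -A(y,x,z,w)
    (hA1 : ∀ x y z w : V, B (Aop x y z) w = - B (Aop y x z) w)
    -- A(x,y,z,w) = A(z,w,x,y)
    (hA2 : ∀ x y z w : V, B (Aop x y z) w = B (Aop z w x) y)
    -- first Bianchi identity
    (hA3 : ∀ x y z w : V, B (Aop x y z) w + B (Aop y z x) w + B (Aop z x y) w = 0)
    -- 𝔐 is Jacobi–Tsankov
    (hJT : ∀ x y : V, jacobiOp Aop x ∘ₗ jacobiOp Aop y = jacobiOp Aop y ∘ₗ jacobiOp Aop x) :
    ∀ x : V, IsNilpotent (jacobiOp Aop x) ∧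
      ∀ c : ℝ, Module.End.HasEigenvalue (jacobiOp Aop x) c → c = 0 := by
  -- antisymmetry of `Aop` in the first two slots, as vectors
  have hanti : ∀ x y z : V, Aop x y z = - Aop y x z := by
    intro x y z
    have h : ∀ w, B (Aop x y z + Aop y x z) w = 0 := by
      intro w
      simp only [map_add, LinearMap.add_apply, hA1 x y z w]
      ring
    have := hBnd _ h
    have : Aop x y z + Aop y x z = 0 := this
    linear_combination (norm := module) this
  have hxx : ∀ a b : V, Aop a a b = 0 := by
    intro a b
    have h2 : (2:ℝ) • ((Aop a) a) b = 0 := by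
      linear_combination (norm := module) hanti a a b
    rcases smul_eq_zero.mp h2 with h | h
    · norm_num at h
    · exact h
  -- pointwise commutation of Jacobi operators
  have hcomm : ∀ x y v : V, Aop (Aop v y y) x x = Aop (Aop v x x) y y := by
    intro x y v
    have := congrArg (fun f : V →ₗ[ℝ] V => f v) (hJT x y)
    simpa [jacobiOp, LinearMap.comp_apply] using this
  -- the key identity : J(x)² = 0
  have key : ∀ x z : V, Aop (Aop z x x) x x = 0 := by
    intro x z
    have h1 := hcomm x (x + z) x
    have h2 := hcomm x z x
    simp only [map_add, LinearMap.add_apply, hxx, map_zero, LinearMap.zero_apply,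
      zero_add, add_zero] at h1 h2
    -- h2 : Aop (Aop x z z) x x = 0,  h1 : Aop (Aop x z x + Aop x z z) x x = 0 (roughly)
    have h3 : Aop (Aop x z x) x x = 0 := by
      rw [h2, add_zero] at h1
      exact h1
    have h4 : Aop z x x = - Aop x z x := hanti z x x
    rw [h4, map_neg, LinearMap.neg_apply, LinearMap.neg_apply, h3, neg_zero]
  intro x
  have hsq : jacobiOp Aop x ^ 2 = 0 := by
    ext w
    have : (jacobiOp Aop x) ((jacobiOp Aop x) w) = 0 := by
      simpa [jacobiOp] using key x w
    simpa [pow_two] using this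
  refine ⟨⟨2, hsq⟩, ?_⟩
  intro c hc
  obtain ⟨v, hv⟩ := hc.exists_hasEigenvector
  have hv0 := hv.right
  have hve := hv.apply_eq_smul
  have h1 : (jacobiOp Aop x) ((jacobiOp Aop x) v) = (c * c) • v := by
    rw [hve, map_smul, hve, smul_smul]
  have h2 : (jacobiOp Aop x) ((jacobiOp Aop x) v) = 0 := by
    have := congrArg (fun f : V →ₗ[ℝ] V => f v) hsq
    simpa [pow_two] using this
  have : (c * c) • v = (0 : V) := by rw [← h1, h2]
  rcases smul_eq_zero.mp this with h | h
  · nlinarith [sq_nonneg c]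
  · exact absurd h hv0
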